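/- Let N ≥ 1 and let 0 < α₁ < β₁ < α₂ < β₂ < ⋯ < α_N < β_N be real numbers. Define M(s) = ∏_{i=1}^N (s + α_i)/(s + β_i). Then M admits the partial fraction decomposition M(s) = 1 + Σ_{i=1}^N k_i/(s + β_i), where k_i = (α_i - β_i)·∏_{j≠i} (α_j - β_i)/(β_j - β_i), and every coefficient k_i is strictly negative. -/

import Mathlib

open Finset
open Polynomial in
-- auxiliary: sign part
lemma aux_sign (N : ℕ) (α β : Fin N → ℝ)
    (hab : ∀ i, α i < β i)
    (hba : ∀ i j : Fin N, i < j → β i < α j)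
    (i : Fin N) :
    (α i - β i) * ∏ j ∈ Finset.univ.erase i, (α j - β i) / (β j - β i) < 0 := by
  apply mul_neg_of_neg_of_pos (by linarith [hab i])
  apply Finset.prod_pos
  intro j hj
  have hji : j ≠ i := (Finset.mem_erase.mp hj).1
  rcases lt_or_gt_of_ne hji with h | h
  · have h1 : α j < β j := hab j
    have h2 : β j < α i := hba j i h
    have h3 : α i < β i := hab i
    exact div_pos_of_neg_of_neg (by linarith) (by linarith)
  · have h2 : β i < α j := hba i j h
    have h3 : α j < β j := hab j
    exact div_pos (by linarith) (by linarith)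


open Polynomial in
lemma aux_poly (N : ℕ) (hN : 1 ≤ N) (α β : Fin N → ℝ)
    (hab : ∀ i, α i < β i)
    (hba : ∀ i j : Fin N, i < j → β i < α j)
    (k : Fin N → ℝ)
    (hk : ∀ i, k i = (α i - β i) *
      ∏ j ∈ Finset.univ.erase i, (α j - β i) / (β j - β i)) :
    (∏ i, (X + C (α i : ℂ))) =
      (∏ i, (X + C (β i : ℂ))) +
        ∑ i, C (k i : ℂ) * ∏ j ∈ Finset.univ.erase i, (X + C (β j : ℂ)) := by
  classical
  have hβmono : StrictMono β := by
    intro i j hij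
    have := hba i j hij
    have := hab j
    linarith
  have hβinj : Function.Injective (fun i => -(β i : ℂ)) := by
    intro i j h
    simp only [neg_inj, Complex.ofReal_inj] at h
    exact hβmono.injective h
  set P : ℂ[X] := ∏ i, (X + C (α i : ℂ)) with hP
  set Q : ℂ[X] := ∏ i, (X + C (β i : ℂ)) with hQ
  set S : ℂ[X] := ∑ i, C (k i : ℂ) * ∏ j ∈ Finset.univ.erase i, (X + C (β j : ℂ)) with hS
  have hPm : P.Monic := monic_prod_of_monic _ _ fun i _ => monic_X_add_C _
  have hQm : Q.Monic := monic_prod_of_monic _ _ fun i _ => monic_X_add_C _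
  have hPdeg : P.natDegree = N := by
    rw [hP, natDegree_prod_of_monic _ _ fun i _ => monic_X_add_C _]
    simp
  have hQdeg : Q.natDegree = N := by
    rw [hQ, natDegree_prod_of_monic _ _ fun i _ => monic_X_add_C _]
    simp
  have hDdeg : (P - Q - S).natDegree < N := by
    have hPd : P.degree = (N : WithBot ℕ) := by
      rw [degree_eq_natDegree hPm.ne_zero, hPdeg]
    have hQd : Q.degree = (N : WithBot ℕ) := by
      rw [degree_eq_natDegree hQm.ne_zero, hQdeg]
    have h1 : (P - Q).degree < (N : WithBot ℕ) := by
      have := degree_sub_lt (hPd.trans hQd.symm) hPm.ne_zero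
        (hPm.leadingCoeff.trans hQm.leadingCoeff.symm)
      rwa [hPd] at this
    have h2 : S.degree < (N : WithBot ℕ) := by
      apply lt_of_le_of_lt (degree_sum_le _ _)
      apply Finset.sup_lt_iff (by exact_mod_cast WithBot.bot_lt_coe (N:ℕ)) |>.mpr
      intro i _
      apply lt_of_le_of_lt (degree_mul_le _ _)
      have hd : (∏ j ∈ Finset.univ.erase i, (X + C ((β j : ℂ)))).degree = ((N - 1 : ℕ) : WithBot ℕ) := by
        rw [degree_eq_natDegree (monic_prod_of_monic _ _ fun j _ => monic_X_add_C _).ne_zero,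
          natDegree_prod_of_monic _ _ fun j _ => monic_X_add_C _]
        simp [Finset.card_erase_of_mem]
      rw [hd]
      calc (C ((k i : ℂ))).degree + ((N - 1 : ℕ) : WithBot ℕ)
          ≤ 0 + ((N - 1 : ℕ) : WithBot ℕ) := add_le_add (degree_C_le) le_rfl
        _ = ((N - 1 : ℕ) : WithBot ℕ) := by rw [zero_add]
        _ < (N : WithBot ℕ) := by exact_mod_cast Nat.sub_lt (by omega) one_pos
    have hdd : (P - Q - S).degree < (N : WithBot ℕ) :=
      lt_of_le_of_lt (degree_sub_le _ _) (max_lt h1 h2)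
    rcases eq_or_ne (P - Q - S) 0 with h0 | h0
    · rw [h0]; simpa using (show 0 < N by omega)
    · exact (natDegree_lt_iff_degree_lt h0).mpr (by exact_mod_cast hdd)
  have heval : ∀ i, (P - Q - S).eval (-(β i : ℂ)) = 0 := by
    intro i
    have hQe : Q.eval (-(β i : ℂ)) = 0 := by
      rw [hQ, eval_prod]
      exact Finset.prod_eq_zero (Finset.mem_univ i) (by simp)
    have hPe : P.eval (-(β i : ℂ)) = ∏ j, ((α j : ℂ) - (β i : ℂ)) := by
      rw [hP, eval_prod]; congr 1; ext j; simp; ring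
    have hSe : S.eval (-(β i : ℂ)) =
        (k i : ℂ) * ∏ j ∈ Finset.univ.erase i, ((β j : ℂ) - (β i : ℂ)) := by
      rw [hS, eval_finset_sum]
      rw [Finset.sum_eq_single i]
      · simp [eval_prod]; left; congr 1; ext j; ring
      · intro j _ hji
        have : ((∏ l ∈ Finset.univ.erase j, (X + C ((β l : ℂ)))).eval (-(β i : ℂ))) = 0 := by
          rw [eval_prod]
          exact Finset.prod_eq_zero (Finset.mem_erase.mpr ⟨(Ne.symm hji), Finset.mem_univ i⟩)
            (by simp)
        simp [this]
      · simp
    -- key algebra: k i * ∏_{j≠i} (β j - β i) = ∏ j (α j - β i), in ℝ then cast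
    have hkey : (k i) * ∏ j ∈ Finset.univ.erase i, (β j - β i) = ∏ j, (α j - β i) := by
      have hne : ∀ j ∈ Finset.univ.erase i, β j - β i ≠ 0 := by
        intro j hj
        have hji : j ≠ i := (Finset.mem_erase.mp hj).1
        have := hβmono.injective.ne hji
        intro h; apply this; linarith
      rw [hk i, ← Finset.mul_prod_erase Finset.univ _ (Finset.mem_univ i)]
      rw [mul_assoc, ← Finset.prod_mul_distrib]
      congr 1
      apply Finset.prod_congr rfl
      intro j hj
      field_simp [hne j hj]
    have hkeyC : (k i : ℂ) * ∏ j ∈ Finset.univ.erase i, ((β j : ℂ) - (β i : ℂ)) =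
        ∏ j, ((α j : ℂ) - (β i : ℂ)) := by
      exact_mod_cast congrArg (Complex.ofReal) hkey
    simp [eval_sub, hQe, hPe, hSe, hkeyC]
  have hD0 : P - Q - S = 0 := by
    apply eq_zero_of_natDegree_lt_card_of_eval_eq_zero _ hβinj heval
    simpa using hDdeg
  linear_combination hD0



open Finset


/-- RL partial fraction decomposition: for interlacing parameters
`0 < α₁ < β₁ < ⋯ < α_N < β_N`, the function `M(s) = ∏ (s+αᵢ)/(s+βᵢ)` equals
`1 + Σ kᵢ/(s+βᵢ)` with `kᵢ = (αᵢ-βᵢ)·∏_{j≠i}(αⱼ-βᵢ)/(βⱼ-βᵢ)`, and each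
`kᵢ < 0`. -/
theorem stmt7 (N : ℕ) (hN : 1 ≤ N) (α β : Fin N → ℝ)
    (hpos : ∀ i, 0 < α i)
    (hab : ∀ i, α i < β i)
    (hba : ∀ i j : Fin N, i < j → β i < α j)
    (k : Fin N → ℝ)
    (hk : ∀ i, k i = (α i - β i) *
      ∏ j ∈ Finset.univ.erase i, (α j - β i) / (β j - β i)) :
    (∀ s : ℂ, (∀ j, s ≠ -(β j : ℂ)) →
        ∏ i, (s + (α i : ℂ)) / (s + (β i : ℂ)) =
          1 + ∑ i, (k i : ℂ) / (s + (β i : ℂ))) ∧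
      ∀ i, k i < 0 := by
  classical
  constructor
  · intro s hs
    have hsne : ∀ j, s + (β j : ℂ) ≠ 0 := by
      intro j h
      exact hs j (by linear_combination h)
    have hpoly := aux_poly N hN α β hab hba k hk
    have heval := congrArg (Polynomial.eval s) hpoly
    simp only [Polynomial.eval_prod, Polynomial.eval_add, Polynomial.eval_X,
      Polynomial.eval_C, Polynomial.eval_finset_sum, Polynomial.eval_mul] at heval
    have hQne : (∏ i, (s + (β i : ℂ))) ≠ 0 := Finset.prod_ne_zero_iff.mpr fun i _ => hsne i
    rw [Finset.prod_div_distrib]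
    rw [heval, add_div, div_self hQne, Finset.sum_div]
    congr 1
    apply Finset.sum_congr rfl
    intro i _
    rw [← Finset.mul_prod_erase Finset.univ _ (Finset.mem_univ i)]
    have hEne : (∏ j ∈ Finset.univ.erase i, (s + (β j : ℂ))) ≠ 0 :=
      Finset.prod_ne_zero_iff.mpr fun j _ => hsne j
    rw [mul_div_mul_right _ _ hEne]
  · intro i
    rw [hk i]
    exact aux_sign N α β hab hba i
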